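/- (Quillen) Assume the ideal I is t-unital, and let f : L → M be an A-linear map with null kernel and cokernel. Then: (a) for every t-unital A-module D, the map id_D ⊗ f : D ⊗_A L → D ⊗_A M is bijective; (b) for every t-unital A-module E, postcomposition with f gives a bijection Hom_A(E, L) → Hom_A(E, M); (c) for every c-unital A-module P, precomposition with f gives a bijection Hom_A(M, P) → Hom_A(L, P). -/

import Mathlib

open TensorProduct

/-- The natural `A`-linear map `μ_M : I ⊗[A] M → M` determined by `i ⊗ m ↦ i • m`.
An `A`-module `M` is *t-unital* (with respect to the ideal `I`) if `μ_M` is bijective. -/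
noncomputable def muMap {A : Type*} [CommRing A] (I : Ideal A)
    (M : Type*) [AddCommGroup M] [Module A M] : I ⊗[A] M →ₗ[A] M :=
  TensorProduct.lift ((LinearMap.lsmul A M).comp I.subtype)

/-- The natural `A`-linear map `ε_M : M → Hom_A(I, M)`, `m ↦ (i ↦ i • m)`.
An `A`-module `M` is *c-unital* (with respect to the ideal `I`) if `ε_M` is bijective. -/
def epsMap {A : Type*} [CommRing A] (I : Ideal A)
    (M : Type*) [AddCommGroup M] [Module A M] : M →ₗ[A] (I →ₗ[A] M) :=
  ((LinearMap.lsmul A M).comp I.subtype).flip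

section Aux
variable {A : Type*} [CommRing A] (I : Ideal A)

@[simp] lemma muMap_tmul {M : Type*} [AddCommGroup M] [Module A M] (i : I) (m : M) :
    muMap I M (i ⊗ₜ m) = (i : A) • m := by
  simp [muMap]

@[simp] lemma epsMap_apply {M : Type*} [AddCommGroup M] [Module A M] (m : M) (i : I) :
    epsMap I M m i = (i : A) • m := rfl

lemma muMap_natural {L M : Type*} [AddCommGroup L] [Module A L] [AddCommGroup M] [Module A M]
    (g : L →ₗ[A] M) :
    (muMap I M) ∘ₗ (LinearMap.lTensor I g) = g ∘ₗ (muMap I L) := by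
  apply TensorProduct.ext'
  intro i x
  simp

noncomputable def sigmaEquiv (D N : Type*) [AddCommGroup D] [Module A D]
    [AddCommGroup N] [Module A N] : (I ⊗[A] D) ⊗[A] N ≃ₗ[A] D ⊗[A] (I ⊗[A] N) :=
  (TensorProduct.congr (TensorProduct.comm A I D) (LinearEquiv.refl A N)).trans
    (TensorProduct.assoc A D I N)

lemma sigma_mu (D N : Type*) [AddCommGroup D] [Module A D] [AddCommGroup N] [Module A N] :
    (LinearMap.lTensor D (muMap I N)) ∘ₗ (sigmaEquiv I D N).toLinearMap
      = LinearMap.rTensor N (muMap I D) := by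
  ext i d n
  simp [sigmaEquiv, smul_tmul]

lemma sigma_natural (D : Type*) [AddCommGroup D] [Module A D]
    {L M : Type*} [AddCommGroup L] [Module A L] [AddCommGroup M] [Module A M]
    (f : L →ₗ[A] M) :
    (sigmaEquiv I D M).toLinearMap ∘ₗ LinearMap.lTensor (I ⊗[A] D) f
      = LinearMap.lTensor D (LinearMap.lTensor I f) ∘ₗ (sigmaEquiv I D L).toLinearMap := by
  ext i d x
  simp [sigmaEquiv]

lemma exists_q (hI : Function.Bijective (muMap I I))
    {L M : Type*} [AddCommGroup L] [Module A L] [AddCommGroup M] [Module A M]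
    (f : L →ₗ[A] M)
    (hker : ∀ i ∈ I, ∀ x ∈ LinearMap.ker f, i • x = 0)
    (hcoker : ∀ i ∈ I, ∀ m : M, i • m ∈ LinearMap.range f) :
    ∃ q : I ⊗[A] M →ₗ[A] L,
      f ∘ₗ q = muMap I M ∧ q ∘ₗ LinearMap.lTensor I f = muMap I L := by
  classical
  set K := LinearMap.ker f with hK
  set fbar : (L ⧸ K) →ₗ[A] M := K.liftQ f le_rfl with hfbardef
  have hfbar_mk : ∀ x : L, fbar (Submodule.Quotient.mk x) = f x := fun x => rfl
  have hfbar_inj : Function.Injective fbar := by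
    rw [← LinearMap.ker_eq_bot, hfbardef, Submodule.ker_liftQ]
    exact Submodule.mkQ_map_self K
  have hmem : ∀ z : I ⊗[A] M, muMap I M z ∈ LinearMap.range f := by
    intro z
    induction z using TensorProduct.induction_on with
    | zero => simp
    | tmul i m => simpa using hcoker i i.2 m
    | add x y hx hy => rw [map_add]; exact add_mem hx hy
  set p : I ⊗[A] M →ₗ[A] (L ⧸ K) :=
    (f.quotKerEquivRange).symm.toLinearMap ∘ₗ
      (muMap I M).codRestrict (LinearMap.range f) hmem with hpdef
  have hfbar_range : ∀ u : L ⧸ K, fbar u = (f.quotKerEquivRange u : M) := by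
    intro u
    obtain ⟨x, rfl⟩ := Submodule.Quotient.mk_surjective K u
    rw [hfbar_mk, f.quotKerEquivRange_apply_mk]
  have hp : ∀ z : I ⊗[A] M, fbar (p z) = muMap I M z := by
    intro z
    rw [hpdef]
    simp only [LinearMap.comp_apply, LinearEquiv.coe_toLinearMap]
    rw [hfbar_range, LinearEquiv.apply_symm_apply]
    rfl
  have hkerle : K ≤ LinearMap.ker ((LinearMap.lsmul A L).comp I.subtype).flip := by
    intro x hx
    simp only [LinearMap.mem_ker]
    ext i
    exact hker i i.2 x hx
  set t : (L ⧸ K) →ₗ[A] (I →ₗ[A] L) :=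
    K.liftQ ((LinearMap.lsmul A L).comp I.subtype).flip hkerle with htdef
  set r : I ⊗[A] (L ⧸ K) →ₗ[A] L := TensorProduct.lift t.flip with hrdef
  have hr : ∀ (i : I) (x : L), r (i ⊗ₜ Submodule.Quotient.mk x) = (i : A) • x := by
    intro i x
    simp [hrdef, htdef]
  have hfr : ∀ (i : I) (u : L ⧸ K), f (r (i ⊗ₜ u)) = (i : A) • fbar u := by
    intro i u
    obtain ⟨x, rfl⟩ := Submodule.Quotient.mk_surjective K u
    rw [hr, hfbar_mk, map_smul]
  set eI : I ⊗[A] I ≃ₗ[A] I := LinearEquiv.ofBijective (muMap I I) hI with heIdef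
  set eM : I ⊗[A] (I ⊗[A] M) ≃ₗ[A] I ⊗[A] M :=
    (TensorProduct.assoc A I I M).symm.trans
      (TensorProduct.congr eI (LinearEquiv.refl A M)) with heMdef
  set eL : I ⊗[A] (I ⊗[A] L) ≃ₗ[A] I ⊗[A] L :=
    (TensorProduct.assoc A I I L).symm.trans
      (TensorProduct.congr eI (LinearEquiv.refl A L)) with heLdef
  set q : I ⊗[A] M →ₗ[A] L :=
    (r ∘ₗ LinearMap.lTensor I p) ∘ₗ eM.symm.toLinearMap with hqdef
  have hqe : q ∘ₗ eM.toLinearMap = r ∘ₗ LinearMap.lTensor I p := by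
    rw [hqdef, LinearMap.comp_assoc]
    simp
  refine ⟨q, ?_, ?_⟩
  · have h1 : f ∘ₗ (q ∘ₗ eM.toLinearMap) = (muMap I M) ∘ₗ eM.toLinearMap := by
      rw [hqe]
      ext i j m
      simp only [LinearMap.comp_apply, LinearMap.lTensor_tmul, AlgebraTensorModule.curry_apply,
        curry_apply, LinearMap.coe_restrictScalars, LinearEquiv.coe_toLinearMap]
      rw [hfr, hp]
      simp [heMdef, heIdef, LinearEquiv.ofBijective_apply, smul_smul]
    apply LinearMap.ext; intro z
    have := LinearMap.congr_fun h1 (eM.symm z)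
    simpa using this
  · have hnat : LinearMap.lTensor I f ∘ₗ eL.toLinearMap
        = eM.toLinearMap ∘ₗ LinearMap.lTensor I (LinearMap.lTensor I f) := by
      ext i j x
      simp [heMdef, heLdef]
    have h2 : (q ∘ₗ LinearMap.lTensor I f) ∘ₗ eL.toLinearMap
        = (muMap I L) ∘ₗ eL.toLinearMap := by
      rw [LinearMap.comp_assoc, hnat, ← LinearMap.comp_assoc, hqe, LinearMap.comp_assoc]
      ext i j x
      simp only [LinearMap.comp_apply, LinearMap.lTensor_tmul, AlgebraTensorModule.curry_apply,
        curry_apply, LinearMap.coe_restrictScalars, LinearEquiv.coe_toLinearMap]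
      have hpval : p ((j : I) ⊗ₜ f x) = Submodule.Quotient.mk ((j : A) • x) := by
        apply hfbar_inj
        rw [hp, hfbar_mk]
        simp [map_smul]
      rw [hpval, hr]
      simp [heLdef, heIdef, LinearEquiv.ofBijective_apply, smul_smul]
    apply LinearMap.ext; intro z
    have := LinearMap.congr_fun h2 (eL.symm z)
    simpa using this

end Aux

/-- (Quillen) Let `I` be a t-unital ideal and `f : L → M` an `A`-linear map with
null kernel and cokernel. Then:
(a) for every t-unital `A`-module `D`, the map `id_D ⊗ f : D ⊗[A] L → D ⊗[A] M`
is bijective;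
(b) for every t-unital `A`-module `E`, postcomposition with `f` is a bijection
`Hom_A(E, L) → Hom_A(E, M)`;
(c) for every c-unital `A`-module `P`, precomposition with `f` is a bijection
`Hom_A(M, P) → Hom_A(L, P)`. -/
theorem bijective_of_null_ker_coker_t_c_unital {A : Type*} [CommRing A]
    (I : Ideal A)
    (hI : Function.Bijective (muMap I I))
    {L M : Type*} [AddCommGroup L] [Module A L] [AddCommGroup M] [Module A M]
    (f : L →ₗ[A] M)
    (hker : ∀ i ∈ I, ∀ x ∈ LinearMap.ker f, i • x = 0)
    (hcoker : ∀ i ∈ I, ∀ m : M, i • m ∈ LinearMap.range f) :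
    (∀ (D : Type*) [AddCommGroup D] [Module A D],
      Function.Bijective (muMap I D) →
      Function.Bijective (LinearMap.lTensor D f)) ∧
    (∀ (E : Type*) [AddCommGroup E] [Module A E],
      Function.Bijective (muMap I E) →
      Function.Bijective (fun g : E →ₗ[A] L => f ∘ₗ g)) ∧
    (∀ (P : Type*) [AddCommGroup P] [Module A P],
      Function.Bijective (epsMap I P) →
      Function.Bijective (fun g : M →ₗ[A] P => g ∘ₗ f)) := by
  obtain ⟨q, hq1, hq2⟩ := exists_q I hI f hker hcoker
  have hq1' : ∀ z : I ⊗[A] M, f (q z) = muMap I M z := fun z => LinearMap.congr_fun hq1 z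
  have hq2' : ∀ z : I ⊗[A] L, q (LinearMap.lTensor I f z) = muMap I L z :=
    fun z => LinearMap.congr_fun hq2 z
  refine ⟨?_, ?_, ?_⟩
  · -- part (a)
    intro D _ _ hD
    set eD : I ⊗[A] D ≃ₗ[A] D := LinearEquiv.ofBijective (muMap I D) hD with heD
    have hid : muMap I D ∘ₗ eD.symm.toLinearMap = LinearMap.id := by
      apply LinearMap.ext; intro z
      have := eD.apply_symm_apply z
      rwa [heD, LinearEquiv.ofBijective_apply] at this
    set Φ : D ⊗[A] M →ₗ[A] D ⊗[A] L :=
      (LinearMap.lTensor D q) ∘ₗ (sigmaEquiv I D M).toLinearMap ∘ₗ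
        (LinearMap.rTensor M eD.symm.toLinearMap) with hΦ
    have hmu_eD : ∀ w : D ⊗[A] M,
        LinearMap.rTensor M (muMap I D) (LinearMap.rTensor M eD.symm.toLinearMap w) = w := by
      intro w
      rw [← LinearMap.comp_apply, ← LinearMap.rTensor_comp, hid, LinearMap.rTensor_id]
      rfl
    have hmu_eD' : ∀ w : D ⊗[A] L,
        LinearMap.rTensor L (muMap I D) (LinearMap.rTensor L eD.symm.toLinearMap w) = w := by
      intro w
      rw [← LinearMap.comp_apply, ← LinearMap.rTensor_comp, hid, LinearMap.rTensor_id]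
      rfl
    have signat : ∀ w : (I ⊗[A] D) ⊗[A] L,
        (sigmaEquiv I D M) (LinearMap.lTensor (I ⊗[A] D) f w)
          = LinearMap.lTensor D (LinearMap.lTensor I f) ((sigmaEquiv I D L) w) := by
      intro w
      have := LinearMap.congr_fun (sigma_natural I D f) w
      simpa using this
    have sigmuM : ∀ w : (I ⊗[A] D) ⊗[A] M,
        LinearMap.lTensor D (muMap I M) ((sigmaEquiv I D M) w)
          = LinearMap.rTensor M (muMap I D) w := by
      intro w
      have := LinearMap.congr_fun (sigma_mu I D M) w
      simpa using this
    have sigmuL : ∀ w : (I ⊗[A] D) ⊗[A] L,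
        LinearMap.lTensor D (muMap I L) ((sigmaEquiv I D L) w)
          = LinearMap.rTensor L (muMap I D) w := by
      intro w
      have := LinearMap.congr_fun (sigma_mu I D L) w
      simpa using this
    rw [Function.bijective_iff_has_inverse]
    refine ⟨Φ, ?_, ?_⟩
    · -- Φ ∘ lTensor D f = id
      intro z
      show Φ (LinearMap.lTensor D f z) = z
      rw [hΦ]
      simp only [LinearMap.comp_apply, LinearEquiv.coe_toLinearMap]
      rw [show LinearMap.rTensor M eD.symm.toLinearMap (LinearMap.lTensor D f z)
            = LinearMap.lTensor (I ⊗[A] D) f (LinearMap.rTensor L eD.symm.toLinearMap z) by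
          rw [← LinearMap.comp_apply, ← LinearMap.comp_apply,
            LinearMap.rTensor_comp_lTensor, LinearMap.lTensor_comp_rTensor]]
      rw [signat]
      rw [← LinearMap.comp_apply, ← LinearMap.lTensor_comp, hq2]
      rw [sigmuL]
      exact hmu_eD' z
    · -- lTensor D f ∘ Φ = id
      intro z
      show LinearMap.lTensor D f (Φ z) = z
      rw [hΦ]
      simp only [LinearMap.comp_apply, LinearEquiv.coe_toLinearMap]
      rw [← LinearMap.comp_apply (LinearMap.lTensor D f), ← LinearMap.lTensor_comp, hq1]
      rw [sigmuM]
      exact hmu_eD z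
  · -- part (b)
    intro E _ _ hE
    set eE : I ⊗[A] E ≃ₗ[A] E := LinearEquiv.ofBijective (muMap I E) hE with heE
    have hmuE : ∀ z : E, muMap I E (eE.symm z) = z := by
      intro z
      have := eE.apply_symm_apply z
      rwa [heE, LinearEquiv.ofBijective_apply] at this
    rw [Function.bijective_iff_has_inverse]
    refine ⟨fun h => q ∘ₗ LinearMap.lTensor I h ∘ₗ eE.symm.toLinearMap, ?_, ?_⟩
    · intro g
      apply LinearMap.ext; intro x
      show q (LinearMap.lTensor I (f ∘ₗ g) (eE.symm x)) = g x
      rw [LinearMap.lTensor_comp, LinearMap.comp_apply, hq2']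
      have := LinearMap.congr_fun (muMap_natural I g) (eE.symm x)
      simp only [LinearMap.comp_apply] at this
      rw [this, hmuE]
    · intro h
      apply LinearMap.ext; intro x
      show f (q (LinearMap.lTensor I h (eE.symm x))) = h x
      rw [hq1']
      have := LinearMap.congr_fun (muMap_natural I h) (eE.symm x)
      simp only [LinearMap.comp_apply] at this
      rw [this, hmuE]
  · -- part (c)
    intro P _ _ hP
    set eP : P ≃ₗ[A] (I →ₗ[A] P) := LinearEquiv.ofBijective (epsMap I P) hP with heP
    have hePap : ∀ z : P, eP z = epsMap I P z := by
      intro z; rw [heP, LinearEquiv.ofBijective_apply]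
    constructor
    · -- injective
      intro g₁ g₂ hgg
      apply LinearMap.ext; intro m
      apply eP.injective
      apply LinearMap.ext; intro i
      rw [hePap, hePap]
      simp only [epsMap_apply]
      obtain ⟨x, hx⟩ := hcoker i i.2 m
      have hgg' : g₁ ∘ₗ f = g₂ ∘ₗ f := hgg
      rw [← map_smul, ← map_smul, ← hx, ← LinearMap.comp_apply, ← LinearMap.comp_apply, hgg']
    · -- surjective
      intro h
      refine ⟨eP.symm.toLinearMap ∘ₗ (TensorProduct.curry (h ∘ₗ q)).flip, ?_⟩
      apply LinearMap.ext; intro x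
      show eP.symm ((TensorProduct.curry (h ∘ₗ q)).flip (f x)) = h x
      have : (TensorProduct.curry (h ∘ₗ q)).flip (f x) = eP (h x) := by
        apply LinearMap.ext; intro i
        rw [hePap]
        simp only [LinearMap.flip_apply, TensorProduct.curry_apply, LinearMap.comp_apply,
          epsMap_apply]
        have : q ((i : I) ⊗ₜ f x) = (i : A) • x := by
          have := hq2' ((i : I) ⊗ₜ x)
          simpa using this
        rw [this, map_smul]
      rw [this, LinearEquiv.symm_apply_apply]
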